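/- Fix α ∈ ℂ and ρ, η > 0 with the closed disk of center α and radius ρ + 2η contained in the open unit disk. For δ ∈ [0, η], define ψ_δ : D(0;1) → D(0;1) by ψ_δ(α + r e^{iθ}) = α + ((ρ+δ)/ρ) r e^{iθ} for 0 ≤ r ≤ ρ, ψ_δ(α + r e^{iθ}) = α + (½(r−ρ) + ρ + δ) e^{iθ} for ρ ≤ r ≤ ρ + 2δ, and ψ_δ = identity elsewhere. Then each ψ_δ is a homeomorphism of the open unit disk, and for all ε, δ ∈ [0, η] and all z ∈ D(0;1), |ψ_ε(z) − ψ_δ(z)| ≤ |ε − δ|; in particular δ ↦ ψ_δ is continuous into H(D(0;1)) with the uniform topology. -/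

import Mathlib

noncomputable def kfun (ρ δ r : ℝ) : ℝ :=
  if r ≤ ρ then (ρ + δ) / ρ
  else if r ≤ ρ + 2 * δ then ((1 / 2) * (r - ρ) + ρ + δ) / r
  else 1

noncomputable def kinv (ρ δ r : ℝ) : ℝ :=
  if r ≤ ρ + δ then ρ / (ρ + δ)
  else if r ≤ ρ + 2 * δ then (2 * (r - ρ - δ) + ρ) / r
  else 1

variable {ρ δ ε r : ℝ}

lemma kfun_one_le (hρ : 0 < ρ) (hδ : 0 ≤ δ) (hr : 0 ≤ r) : 1 ≤ kfun ρ δ r := by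
  unfold kfun
  split_ifs with h1 h2
  · rw [le_div_iff₀ hρ]; linarith
  · rw [le_div_iff₀ (by linarith)]; linarith
  · exact le_refl 1

lemma kinv_pos (hρ : 0 < ρ) (hδ : 0 ≤ δ) (hr : 0 ≤ r) : 0 < kinv ρ δ r := by
  unfold kinv
  split_ifs with h1 h2
  · positivity
  · exact div_pos (by linarith) (by linarith)
  · norm_num

lemma kinv_le_one (hρ : 0 < ρ) (hδ : 0 ≤ δ) (hr : 0 ≤ r) : kinv ρ δ r ≤ 1 := by
  unfold kinv
  split_ifs with h1 h2
  · rw [div_le_one (by linarith)]; linarith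
  · rw [div_le_one (by linarith)]; linarith
  · exact le_refl 1

lemma kfun_mul_le (hρ : 0 < ρ) (hδ : 0 ≤ δ) (hr : 0 ≤ r) (h : r ≤ ρ + 2 * δ) :
    kfun ρ δ r * r ≤ ρ + 2 * δ := by
  unfold kfun
  split_ifs with h1
  · rw [div_mul_eq_mul_div, div_le_iff₀ hρ]; nlinarith
  · rw [div_mul_eq_mul_div, div_le_iff₀ (by linarith [lt_of_not_ge h1] : (0:ℝ) < r)]
    nlinarith [lt_of_not_ge h1]

lemma kinv_mul_le (hρ : 0 < ρ) (hδ : 0 ≤ δ) (hr : 0 ≤ r) : kinv ρ δ r * r ≤ r := by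
  nlinarith [kinv_le_one hρ hδ hr, kinv_pos hρ hδ hr]

lemma kfun_of_gt (h : ρ + 2 * δ < r) (hδ : 0 ≤ δ) (hρ : 0 < ρ) : kfun ρ δ r = 1 := by
  unfold kfun; rw [if_neg (by push_neg; linarith), if_neg (by push_neg; linarith)]

lemma kinv_of_gt (h : ρ + 2 * δ < r) (hδ : 0 ≤ δ) (hρ : 0 < ρ) : kinv ρ δ r = 1 := by
  unfold kinv; rw [if_neg (by push_neg; linarith), if_neg (by push_neg; linarith)]

lemma kinv_kfun (hρ : 0 < ρ) (hδ : 0 ≤ δ) (hr : 0 < r) :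
    kinv ρ δ (kfun ρ δ r * r) * kfun ρ δ r = 1 := by
  unfold kfun
  split_ifs with h1 h2
  · rw [kinv, if_pos (by rw [div_mul_eq_mul_div, div_le_iff₀ hρ]; nlinarith)]
    field_simp
  · have h2' : ρ < r := lt_of_not_ge h1
    have hs : ((1 / 2) * (r - ρ) + ρ + δ) / r * r = (1 / 2) * (r - ρ) + ρ + δ := by
      field_simp
    have hspos : (0:ℝ) < (1 / 2) * (r - ρ) + ρ + δ := by nlinarith
    rw [hs, kinv, if_neg (by push_neg; linarith), if_pos (by linarith)]
    have h3 : 2 * ((1 / 2) * (r - ρ) + ρ + δ - ρ - δ) + ρ = r := by ring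
    rw [h3, div_mul_div_comm, div_eq_one_iff_eq (by positivity)]
    ring
  · push_neg at h2
    rw [one_mul, mul_one, kinv_of_gt h2 hδ hρ]

lemma kfun_kinv (hρ : 0 < ρ) (hδ : 0 ≤ δ) (hr : 0 < r) :
    kfun ρ δ (kinv ρ δ r * r) * kinv ρ δ r = 1 := by
  unfold kinv
  split_ifs with h1 h2
  · rw [kfun, if_pos (by rw [div_mul_eq_mul_div, div_le_iff₀ (by linarith : (0:ℝ) < ρ + δ)]; nlinarith)]
    field_simp
  · have h1' : ρ + δ < r := lt_of_not_ge h1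
    have hs : (2 * (r - ρ - δ) + ρ) / r * r = 2 * (r - ρ - δ) + ρ := by field_simp
    have hspos : (0:ℝ) < 2 * (r - ρ - δ) + ρ := by nlinarith
    rw [hs, kfun, if_neg (by push_neg; linarith), if_pos (by linarith)]
    have h3 : (1 / 2) * (2 * (r - ρ - δ) + ρ - ρ) + ρ + δ = r := by ring
    rw [h3, div_mul_div_comm, div_eq_one_iff_eq (by positivity)]
    ring
  · push_neg at h2
    rw [one_mul, mul_one, kfun_of_gt h2 hδ hρ]

lemma kfun_sub_le (hρ : 0 < ρ) (hδ : 0 ≤ δ) (hδε : δ ≤ ε) (hr : 0 ≤ r) :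
    |kfun ρ ε r * r - kfun ρ δ r * r| ≤ ε - δ := by
  have hε : 0 ≤ ε := hδ.trans hδε
  have h0 : (0:ℝ) ≤ ε - δ := by linarith
  unfold kfun
  split_ifs with h1 h2 h3 h3
  · have e : (ρ + ε) / ρ * r - (ρ + δ) / ρ * r = (ε - δ) * r / ρ := by
      field_simp; ring
    rw [e, abs_of_nonneg (by positivity), div_le_iff₀ hρ]
    nlinarith
  · have hr0 : (0:ℝ) < r := hρ.trans (lt_of_not_ge h1)
    have e : ((1 / 2) * (r - ρ) + ρ + ε) / r * r - ((1 / 2) * (r - ρ) + ρ + δ) / r * r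
        = ε - δ := by field_simp; ring
    rw [e, abs_of_nonneg h0]
  · have hr0 : (0:ℝ) < r := hρ.trans (lt_of_not_ge h1)
    have h3' : ρ + 2 * δ < r := lt_of_not_ge h3
    have e : ((1 / 2) * (r - ρ) + ρ + ε) / r * r - 1 * r = ε - (1 / 2) * (r - ρ) := by
      field_simp; ring
    rw [e, abs_of_nonneg (by linarith)]
    linarith
  · exact absurd (h3.trans (by linarith)) h2
  · simpa using h0

lemma kinv_sub_le (hρ : 0 < ρ) (hδ : 0 ≤ δ) (hδε : δ ≤ ε) (hr : 0 ≤ r) :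
    |kinv ρ ε r * r - kinv ρ δ r * r| ≤ 2 * (ε - δ) := by
  have hε : 0 ≤ ε := hδ.trans hδε
  have h0 : (0:ℝ) ≤ ε - δ := by linarith
  have hρε : (0:ℝ) < ρ + ε := by linarith
  have hρδ : (0:ℝ) < ρ + δ := by linarith
  unfold kinv
  split_ifs with c1 d1 d2 c2 d1 d2 d1 d2
  · have e : ρ / (ρ + ε) * r - ρ / (ρ + δ) * r
        = -(ρ * r * (ε - δ) / ((ρ + ε) * (ρ + δ))) := by
      field_simp; ring
    rw [e, abs_neg, abs_of_nonneg (by positivity), div_le_iff₀ (by positivity)]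
    nlinarith [mul_le_mul_of_nonneg_right
      (show ρ * r ≤ (ρ + ε) * (ρ + δ) by nlinarith) h0,
      mul_nonneg (mul_pos hρε hρδ).le h0]
  · have hd1 : ρ + δ < r := lt_of_not_ge d1
    have hr0 : (0:ℝ) < r := hρδ.trans hd1
    have e : ρ / (ρ + ε) * r - (2 * (r - ρ - δ) + ρ) / r * r
        = (ρ * r - (2 * (r - ρ - δ) + ρ) * (ρ + ε)) / (ρ + ε) := by
      field_simp
    rw [e, abs_div, abs_of_pos hρε, div_le_iff₀ hρε, abs_le]
    constructor
    · nlinarith [mul_nonneg (show (0:ℝ) ≤ ρ + ε - r by linarith)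
        (show (0:ℝ) ≤ ρ + 2 * ε by linarith)]
    · nlinarith [mul_nonneg (show (0:ℝ) ≤ r - ρ - δ by linarith)
        (show (0:ℝ) ≤ ρ + 2 * ε by linarith)]
  · have hd2 : ρ + 2 * δ < r := lt_of_not_ge d2
    have e : ρ / (ρ + ε) * r - 1 * r = -(ε * r / (ρ + ε)) := by
      field_simp; ring
    rw [e, abs_neg, abs_of_nonneg (by positivity), div_le_iff₀ hρε]
    nlinarith
  · exact absurd (d1.trans (by linarith)) c1
  · have hc1 : ρ + ε < r := lt_of_not_ge c1
    have hr0 : (0:ℝ) < r := hρε.trans hc1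
    have e : (2 * (r - ρ - ε) + ρ) / r * r - (2 * (r - ρ - δ) + ρ) / r * r
        = -(2 * (ε - δ)) := by field_simp; ring
    rw [e, abs_neg, abs_of_nonneg (by linarith)]
  · have hd2 : ρ + 2 * δ < r := lt_of_not_ge d2
    have hc1 : ρ + ε < r := lt_of_not_ge c1
    have hr0 : (0:ℝ) < r := hρε.trans hc1
    have e : (2 * (r - ρ - ε) + ρ) / r * r - 1 * r = -(ρ + 2 * ε - r) := by
      field_simp; ring
    rw [e, abs_neg, abs_of_nonneg (by linarith)]
    linarith
  · exact absurd (d1.trans (by linarith)) c1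
  · exact absurd (d2.trans (by linarith)) c2
  · simpa using h0

lemma kfun_dist (hρ : 0 < ρ) (hδ : 0 ≤ δ) (hε : 0 ≤ ε) (hr : 0 ≤ r) :
    |kfun ρ ε r * r - kfun ρ δ r * r| ≤ |ε - δ| := by
  rcases le_total δ ε with h | h
  · rw [abs_of_nonneg (by linarith : (0:ℝ) ≤ ε - δ)]
    exact kfun_sub_le hρ hδ h hr
  · rw [abs_sub_comm, abs_sub_comm ε δ, abs_of_nonneg (by linarith : (0:ℝ) ≤ δ - ε)]
    exact kfun_sub_le hρ hε h hr

lemma kinv_dist (hρ : 0 < ρ) (hδ : 0 ≤ δ) (hε : 0 ≤ ε) (hr : 0 ≤ r) :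
    |kinv ρ ε r * r - kinv ρ δ r * r| ≤ 2 * |ε - δ| := by
  rcases le_total δ ε with h | h
  · rw [abs_of_nonneg (by linarith : (0:ℝ) ≤ ε - δ)]
    exact kinv_sub_le hρ hδ h hr
  · rw [abs_sub_comm, abs_sub_comm ε δ, abs_of_nonneg (by linarith : (0:ℝ) ≤ δ - ε)]
    exact kinv_sub_le hρ hε h hr

noncomputable def Fmap (α : ℂ) (ρ δ : ℝ) (z : ℂ) : ℂ :=
  α + ((kfun ρ δ (‖z - α‖) : ℝ) : ℂ) * (z - α)

noncomputable def Gmap (α : ℂ) (ρ δ : ℝ) (z : ℂ) : ℂ :=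
  α + ((kinv ρ δ (‖z - α‖) : ℝ) : ℂ) * (z - α)

variable {α z : ℂ} {η : ℝ}

lemma Fmap_sub (α : ℂ) (ρ δ : ℝ) (z : ℂ) :
    Fmap α ρ δ z - α = ((kfun ρ δ (‖z - α‖) : ℝ) : ℂ) * (z - α) := by
  rw [Fmap]; ring

lemma Gmap_sub (α : ℂ) (ρ δ : ℝ) (z : ℂ) :
    Gmap α ρ δ z - α = ((kinv ρ δ (‖z - α‖) : ℝ) : ℂ) * (z - α) := by
  rw [Gmap]; ring

lemma abs_Fmap_sub (hρ : 0 < ρ) (hδ : 0 ≤ δ) :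
    ‖Fmap α ρ δ z - α‖
      = kfun ρ δ (‖z - α‖) * ‖z - α‖ := by
  rw [Fmap_sub, norm_mul, Complex.norm_real, Real.norm_eq_abs,
    abs_of_nonneg (by linarith [kfun_one_le hρ hδ (norm_nonneg (z - α))])]

lemma abs_Gmap_sub (hρ : 0 < ρ) (hδ : 0 ≤ δ) :
    ‖Gmap α ρ δ z - α‖
      = kinv ρ δ (‖z - α‖) * ‖z - α‖ := by
  rw [Gmap_sub, norm_mul, Complex.norm_real, Real.norm_eq_abs,
    abs_of_nonneg (kinv_pos hρ hδ (norm_nonneg (z - α))).le]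

lemma Gmap_Fmap (hρ : 0 < ρ) (hδ : 0 ≤ δ) : Gmap α ρ δ (Fmap α ρ δ z) = z := by
  by_cases hz : z = α
  · subst hz; simp [Fmap, Gmap]
  · have hr : 0 < ‖z - α‖ := norm_pos_iff.mpr (sub_ne_zero.mpr hz)
    set r := ‖z - α‖ with hrdef
    have habs : ‖Fmap α ρ δ z - α‖ = kfun ρ δ r * r := abs_Fmap_sub hρ hδ
    rw [Gmap, habs, Fmap_sub, ← hrdef]
    have key : kinv ρ δ (kfun ρ δ r * r) * kfun ρ δ r = 1 := kinv_kfun hρ hδ hr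
    have : ((kinv ρ δ (kfun ρ δ r * r) : ℝ) : ℂ) * ((kfun ρ δ r : ℝ) : ℂ) = 1 := by
      rw [← Complex.ofReal_mul, key, Complex.ofReal_one]
    calc α + ((kinv ρ δ (kfun ρ δ r * r) : ℝ) : ℂ) * (((kfun ρ δ r : ℝ) : ℂ) * (z - α))
        = α + (((kinv ρ δ (kfun ρ δ r * r) : ℝ) : ℂ) * ((kfun ρ δ r : ℝ) : ℂ)) * (z - α) := by
          ring
      _ = z := by rw [this]; ring

lemma Fmap_Gmap (hρ : 0 < ρ) (hδ : 0 ≤ δ) : Fmap α ρ δ (Gmap α ρ δ z) = z := by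
  by_cases hz : z = α
  · subst hz; simp [Fmap, Gmap]
  · have hr : 0 < ‖z - α‖ := norm_pos_iff.mpr (sub_ne_zero.mpr hz)
    set r := ‖z - α‖ with hrdef
    have habs : ‖Gmap α ρ δ z - α‖ = kinv ρ δ r * r := abs_Gmap_sub hρ hδ
    rw [Fmap, habs, Gmap_sub, ← hrdef]
    have key : kfun ρ δ (kinv ρ δ r * r) * kinv ρ δ r = 1 := kfun_kinv hρ hδ hr
    have : ((kfun ρ δ (kinv ρ δ r * r) : ℝ) : ℂ) * ((kinv ρ δ r : ℝ) : ℂ) = 1 := by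
      rw [← Complex.ofReal_mul, key, Complex.ofReal_one]
    calc α + ((kfun ρ δ (kinv ρ δ r * r) : ℝ) : ℂ) * (((kinv ρ δ r : ℝ) : ℂ) * (z - α))
        = α + (((kfun ρ δ (kinv ρ δ r * r) : ℝ) : ℂ) * ((kinv ρ δ r : ℝ) : ℂ)) * (z - α) := by
          ring
      _ = z := by rw [this]; ring

lemma Fmap_mem (hρ : 0 < ρ) (hδ : 0 ≤ δ) (hδη : δ ≤ η)
    (hsub : Metric.closedBall α (ρ + 2 * η) ⊆ Metric.ball (0 : ℂ) 1)
    (hz : z ∈ Metric.ball (0 : ℂ) 1) : Fmap α ρ δ z ∈ Metric.ball (0 : ℂ) 1 := by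
  rcases le_or_gt (‖z - α‖) (ρ + 2 * δ) with h | h
  · apply hsub
    rw [Metric.mem_closedBall, Complex.dist_eq, abs_Fmap_sub hρ hδ]
    have := kfun_mul_le hρ hδ (norm_nonneg (z - α)) h
    linarith
  · rw [Fmap, kfun_of_gt h hδ hρ]
    simpa using hz

lemma Gmap_mem (hρ : 0 < ρ) (hδ : 0 ≤ δ) (hδη : δ ≤ η)
    (hsub : Metric.closedBall α (ρ + 2 * η) ⊆ Metric.ball (0 : ℂ) 1)
    (hz : z ∈ Metric.ball (0 : ℂ) 1) : Gmap α ρ δ z ∈ Metric.ball (0 : ℂ) 1 := by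
  rcases le_or_gt (‖z - α‖) (ρ + 2 * δ) with h | h
  · apply hsub
    rw [Metric.mem_closedBall, Complex.dist_eq, abs_Gmap_sub hρ hδ]
    have := kinv_mul_le hρ hδ (norm_nonneg (z - α))
    linarith
  · rw [Gmap, kinv_of_gt h hδ hρ]
    simpa using hz

lemma kfun_eq (hρ : 0 < ρ) (hδ : 0 ≤ δ) (hr : 0 < r) :
    kfun ρ δ r = max (min ((ρ + δ) / ρ) (((1 / 2) * (r - ρ) + ρ + δ) / r)) 1 := by
  unfold kfun
  split_ifs with h1 h2
  · rw [min_eq_left, max_eq_left]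
    · rw [le_div_iff₀ hρ]; linarith
    · rw [div_le_div_iff₀ hρ hr]; nlinarith
  · rw [min_eq_right, max_eq_left]
    · rw [le_div_iff₀ hr]; linarith
    · rw [div_le_div_iff₀ hr hρ]; nlinarith [lt_of_not_ge h1]
  · rw [min_eq_right, max_eq_right]
    · rw [div_le_one hr]; push_neg at h2; linarith
    · rw [div_le_div_iff₀ hr hρ]; nlinarith [lt_of_not_ge h1]

lemma kinv_eq (hρ : 0 < ρ) (hδ : 0 ≤ δ) (hr : 0 < r) :
    kinv ρ δ r = min (max (ρ / (ρ + δ)) ((2 * (r - ρ - δ) + ρ) / r)) 1 := by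
  have hρδ : (0:ℝ) < ρ + δ := by linarith
  unfold kinv
  split_ifs with h1 h2
  · rw [max_eq_left, min_eq_left]
    · rw [div_le_one hρδ]; linarith
    · rw [div_le_div_iff₀ hr hρδ]; nlinarith
  · rw [max_eq_right, min_eq_left]
    · rw [div_le_one hr]; linarith
    · rw [div_le_div_iff₀ hρδ hr]; nlinarith [lt_of_not_ge h1]
  · rw [max_eq_right, min_eq_right]
    · rw [le_div_iff₀ hr]; push_neg at h2; linarith
    · rw [div_le_div_iff₀ hρδ hr]; nlinarith [lt_of_not_ge h1]

lemma continuousAt_abs_sub (α z : ℂ) : ContinuousAt (fun w : ℂ => ‖w - α‖) z :=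
  (continuous_norm.comp (continuous_id.sub continuous_const)).continuousAt

lemma continuous_Fmap (hρ : 0 < ρ) (hδ : 0 ≤ δ) : Continuous (Fmap α ρ δ) := by
  rw [continuous_iff_continuousAt]
  intro z
  rcases lt_or_ge (‖z - α‖) ρ with h | h
  · have hopen : IsOpen {w : ℂ | ‖w - α‖ < ρ} :=
      isOpen_lt (continuous_norm.comp (continuous_id.sub continuous_const))
        continuous_const
    have hev : ∀ᶠ w in nhds z, (fun w => α + (((ρ + δ) / ρ : ℝ) : ℂ) * (w - α)) w
        = Fmap α ρ δ w := by
      filter_upwards [hopen.mem_nhds h] with w hw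
      rw [Fmap, kfun, if_pos (le_of_lt hw)]
    exact ContinuousAt.congr (by fun_prop) hev
  · have hr : 0 < ‖z - α‖ := lt_of_lt_of_le hρ h
    have heq : ∀ᶠ w in nhds z, (fun w => α +
        ((max (min ((ρ + δ) / ρ)
          (((1 / 2) * (‖w - α‖ - ρ) + ρ + δ) / ‖w - α‖)) 1 : ℝ) : ℂ)
          * (w - α)) w = Fmap α ρ δ w := by
      have hopen : IsOpen {w : ℂ | 0 < ‖w - α‖} :=
        isOpen_lt continuous_const
          (continuous_norm.comp (continuous_id.sub continuous_const))
      filter_upwards [hopen.mem_nhds hr] with w hw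
      rw [Fmap, kfun_eq hρ hδ hw]
    apply ContinuousAt.congr _ heq
    have hinner : ContinuousAt (fun w : ℂ => max (min ((ρ + δ) / ρ)
        (((1 / 2) * (‖w - α‖ - ρ) + ρ + δ) / ‖w - α‖)) 1) z := by
      exact Filter.Tendsto.max (Filter.Tendsto.min tendsto_const_nhds
        (ContinuousAt.div (by
          exact ContinuousAt.add (ContinuousAt.add
            (continuousAt_const.mul ((continuousAt_abs_sub α z).sub continuousAt_const))
            continuousAt_const) continuousAt_const)
          (continuousAt_abs_sub α z) hr.ne'))
        tendsto_const_nhds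
    exact ContinuousAt.add continuousAt_const
      (ContinuousAt.mul (Complex.continuous_ofReal.continuousAt.comp hinner) (by fun_prop))

lemma continuous_Gmap (hρ : 0 < ρ) (hδ : 0 ≤ δ) : Continuous (Gmap α ρ δ) := by
  have hρδ : (0:ℝ) < ρ + δ := by linarith
  rw [continuous_iff_continuousAt]
  intro z
  rcases lt_or_ge (‖z - α‖) (ρ + δ) with h | h
  · have hopen : IsOpen {w : ℂ | ‖w - α‖ < ρ + δ} :=
      isOpen_lt (continuous_norm.comp (continuous_id.sub continuous_const))
        continuous_const
    have hev : ∀ᶠ w in nhds z, (fun w => α + ((ρ / (ρ + δ) : ℝ) : ℂ) * (w - α)) w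
        = Gmap α ρ δ w := by
      filter_upwards [hopen.mem_nhds h] with w hw
      rw [Gmap, kinv, if_pos (le_of_lt hw)]
    exact ContinuousAt.congr (by fun_prop) hev
  · have hr : 0 < ‖z - α‖ := lt_of_lt_of_le hρδ h
    have heq : ∀ᶠ w in nhds z, (fun w => α +
        ((min (max (ρ / (ρ + δ))
          ((2 * (‖w - α‖ - ρ - δ) + ρ) / ‖w - α‖)) 1 : ℝ) : ℂ)
          * (w - α)) w = Gmap α ρ δ w := by
      have hopen : IsOpen {w : ℂ | 0 < ‖w - α‖} :=
        isOpen_lt continuous_const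
          (continuous_norm.comp (continuous_id.sub continuous_const))
      filter_upwards [hopen.mem_nhds hr] with w hw
      rw [Gmap, kinv_eq hρ hδ hw]
    apply ContinuousAt.congr _ heq
    have hinner : ContinuousAt (fun w : ℂ => min (max (ρ / (ρ + δ))
        ((2 * (‖w - α‖ - ρ - δ) + ρ) / ‖w - α‖)) 1) z := by
      exact Filter.Tendsto.min (Filter.Tendsto.max tendsto_const_nhds
        (ContinuousAt.div (by
          exact ContinuousAt.add (continuousAt_const.mul
            (((continuousAt_abs_sub α z).sub continuousAt_const).sub continuousAt_const))
            continuousAt_const)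
          (continuousAt_abs_sub α z) hr.ne'))
        tendsto_const_nhds
    exact ContinuousAt.add continuousAt_const
      (ContinuousAt.mul (Complex.continuous_ofReal.continuousAt.comp hinner) (by fun_prop))

lemma Fmap_dist (hρ : 0 < ρ) (hδ : 0 ≤ δ) (hε : 0 ≤ ε) (z : ℂ) :
    ‖Fmap α ρ ε z - Fmap α ρ δ z‖ ≤ |ε - δ| := by
  set r := ‖z - α‖ with hrdef
  have hr : 0 ≤ r := norm_nonneg _
  have e : Fmap α ρ ε z - Fmap α ρ δ z
      = ((kfun ρ ε r - kfun ρ δ r : ℝ) : ℂ) * (z - α) := by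
    rw [Fmap, Fmap]; push_cast; ring
  rw [e, norm_mul, Complex.norm_real, Real.norm_eq_abs, ← hrdef]
  calc |kfun ρ ε r - kfun ρ δ r| * r = |(kfun ρ ε r - kfun ρ δ r) * r| := by
        rw [abs_mul, abs_of_nonneg hr]
    _ = |kfun ρ ε r * r - kfun ρ δ r * r| := by rw [sub_mul]
    _ ≤ |ε - δ| := kfun_dist hρ hδ hε hr

lemma Gmap_dist (hρ : 0 < ρ) (hδ : 0 ≤ δ) (hε : 0 ≤ ε) (z : ℂ) :
    ‖Gmap α ρ ε z - Gmap α ρ δ z‖ ≤ 2 * |ε - δ| := by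
  set r := ‖z - α‖ with hrdef
  have hr : 0 ≤ r := norm_nonneg _
  have e : Gmap α ρ ε z - Gmap α ρ δ z
      = ((kinv ρ ε r - kinv ρ δ r : ℝ) : ℂ) * (z - α) := by
    rw [Gmap, Gmap]; push_cast; ring
  rw [e, norm_mul, Complex.norm_real, Real.norm_eq_abs, ← hrdef]
  calc |kinv ρ ε r - kinv ρ δ r| * r = |(kinv ρ ε r - kinv ρ δ r) * r| := by
        rw [abs_mul, abs_of_nonneg hr]
    _ = |kinv ρ ε r * r - kinv ρ δ r * r| := by rw [sub_mul]
    _ ≤ 2 * |ε - δ| := kinv_dist hρ hδ hε hr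

lemma clamp_nonneg (hη : 0 < η) (δ : ℝ) : 0 ≤ min (max δ 0) η :=
  le_min (le_max_right δ 0) hη.le

lemma clamp_le (η δ : ℝ) : min (max δ 0) η ≤ η := min_le_right _ _

lemma clamp_eq (h : δ ∈ Set.Icc (0:ℝ) η) : min (max δ 0) η = δ := by
  rw [max_eq_left h.1, min_eq_left h.2]

noncomputable def psiH (α : ℂ) (ρ η : ℝ) (hρ : 0 < ρ) (hη : 0 < η)
    (hsub : Metric.closedBall α (ρ + 2 * η) ⊆ Metric.ball (0 : ℂ) 1) (δ : ℝ) :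
    (Metric.ball (0 : ℂ) 1) ≃ₜ (Metric.ball (0 : ℂ) 1) where
  toFun z := ⟨Fmap α ρ (min (max δ 0) η) z,
    Fmap_mem hρ (clamp_nonneg hη δ) (clamp_le η δ) hsub z.2⟩
  invFun z := ⟨Gmap α ρ (min (max δ 0) η) z,
    Gmap_mem hρ (clamp_nonneg hη δ) (clamp_le η δ) hsub z.2⟩
  left_inv z := Subtype.ext (Gmap_Fmap hρ (clamp_nonneg hη δ))
  right_inv z := Subtype.ext (Fmap_Gmap hρ (clamp_nonneg hη δ))
  continuous_toFun := ((continuous_Fmap hρ (clamp_nonneg hη δ)).comp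
    continuous_subtype_val).subtype_mk _
  continuous_invFun := ((continuous_Gmap hρ (clamp_nonneg hη δ)).comp
    continuous_subtype_val).subtype_mk _

lemma psiH_apply (hρ : 0 < ρ) (hη : 0 < η)
    (hsub : Metric.closedBall α (ρ + 2 * η) ⊆ Metric.ball (0 : ℂ) 1) (δ : ℝ)
    (z : Metric.ball (0 : ℂ) 1) :
    ((psiH α ρ η hρ hη hsub δ z : Metric.ball (0 : ℂ) 1) : ℂ)
      = Fmap α ρ (min (max δ 0) η) ↑z := rfl

lemma psiH_symm_apply (hρ : 0 < ρ) (hη : 0 < η)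
    (hsub : Metric.closedBall α (ρ + 2 * η) ⊆ Metric.ball (0 : ℂ) 1) (δ : ℝ)
    (z : Metric.ball (0 : ℂ) 1) :
    (((psiH α ρ η hρ hη hsub δ).symm z : Metric.ball (0 : ℂ) 1) : ℂ)
      = Gmap α ρ (min (max δ 0) η) ↑z := rfl


/-- The topology of uniform convergence on compacts (compact-open topology) on the
homeomorphism group of the open unit disk, on maps and their inverses. -/
noncomputable instance diskHomeoTop :
    TopologicalSpace ((Metric.ball (0 : ℂ) 1) ≃ₜ (Metric.ball (0 : ℂ) 1)) :=
  TopologicalSpace.induced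
    (fun h : (Metric.ball (0 : ℂ) 1) ≃ₜ (Metric.ball (0 : ℂ) 1) =>
      ((⟨h, h.continuous⟩ : C(Metric.ball (0 : ℂ) 1, Metric.ball (0 : ℂ) 1)),
       (⟨h.symm, h.symm.continuous⟩ : C(Metric.ball (0 : ℂ) 1, Metric.ball (0 : ℂ) 1))))
    inferInstance

/-- For `α ∈ ℂ`, `ρ, η > 0` with `closedBall α (ρ + 2η) ⊆ D(0;1)`, there is a family
`ψ_δ` (for `δ ∈ [0, η]`) of homeomorphisms of the open unit disk: `ψ_δ` expands
radially around `α` by the factor `(ρ+δ)/ρ` on `|z − α| ≤ ρ`, sends `α + r e^{iθ}` to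
`α + (½(r−ρ)+ρ+δ) e^{iθ}` for `ρ ≤ r ≤ ρ + 2δ`, and is the identity elsewhere.
Moreover `|ψ_ε(z) − ψ_δ(z)| ≤ |ε − δ|` for all `z`, and `δ ↦ ψ_δ` is continuous
on `[0, η]` into `H(D(0;1))`. -/
theorem stmt19 (α : ℂ) (ρ η : ℝ) (hρ : 0 < ρ) (hη : 0 < η)
    (hsub : Metric.closedBall α (ρ + 2 * η) ⊆ Metric.ball (0 : ℂ) 1) :
    ∃ ψ : ℝ → ((Metric.ball (0 : ℂ) 1) ≃ₜ (Metric.ball (0 : ℂ) 1)),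
      (∀ δ ∈ Set.Icc (0 : ℝ) η, ∀ z : Metric.ball (0 : ℂ) 1,
        ((ψ δ z : ℂ) : ℂ) =
          (if ‖(z : ℂ) - α‖ ≤ ρ then
            α + (((ρ + δ) / ρ) : ℝ) * ((z : ℂ) - α)
          else if ‖(z : ℂ) - α‖ ≤ ρ + 2 * δ then
            α + ((((1 / 2) * (‖(z : ℂ) - α‖ - ρ) + ρ + δ) /
              ‖(z : ℂ) - α‖) : ℝ) * ((z : ℂ) - α)
          else (z : ℂ))) ∧
      (∀ ε ∈ Set.Icc (0 : ℝ) η, ∀ δ ∈ Set.Icc (0 : ℝ) η,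
        ∀ z : Metric.ball (0 : ℂ) 1,
          ‖(ψ ε z : ℂ) - (ψ δ z : ℂ)‖ ≤ |ε - δ|) ∧
      ContinuousOn ψ (Set.Icc (0 : ℝ) η) := by
  refine ⟨psiH α ρ η hρ hη hsub, ?_, ?_, ?_⟩
  · intro δ hδ z
    rw [psiH_apply, clamp_eq hδ, Fmap, kfun]
    split_ifs with h1 h2
    · rfl
    · rfl
    · push_cast; ring
  · intro ε hε δ hδ z
    rw [psiH_apply, psiH_apply, clamp_eq hε, clamp_eq hδ]
    exact Fmap_dist hρ hδ.1 hε.1 _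
  · have hind : Topology.IsInducing
        (fun h : (Metric.ball (0 : ℂ) 1) ≃ₜ (Metric.ball (0 : ℂ) 1) =>
          ((⟨h, h.continuous⟩ : C(Metric.ball (0 : ℂ) 1, Metric.ball (0 : ℂ) 1)),
           (⟨h.symm, h.symm.continuous⟩ :
             C(Metric.ball (0 : ℂ) 1, Metric.ball (0 : ℂ) 1)))) := ⟨rfl⟩
    rw [hind.continuousOn_iff]
    simp only [Function.comp_def]
    apply ContinuousOn.prodMk
    · intro δ0 hδ0
      rw [ContinuousWithinAt,
        ContinuousMap.tendsto_iff_forall_isCompact_tendstoUniformlyOn]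
      intro K hK
      rw [Metric.tendstoUniformlyOn_iff]
      intro e he
      have hball : ∀ᶠ δ in nhdsWithin δ0 (Set.Icc (0:ℝ) η), |δ - δ0| < e / 3 := by
        apply Filter.Eventually.filter_mono nhdsWithin_le_nhds
        filter_upwards [Metric.ball_mem_nhds δ0 (by linarith : (0:ℝ) < e / 3)] with δ hd
        rw [Metric.mem_ball, Real.dist_eq] at hd; exact hd
      filter_upwards [hball, self_mem_nhdsWithin] with δ hclose hmem
      intro z hz
      simp only [ContinuousMap.coe_mk]
      rw [Subtype.dist_eq, Complex.dist_eq, psiH_apply, psiH_apply,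
        clamp_eq hmem, clamp_eq hδ0]
      have := Fmap_dist (α := α) hρ hmem.1 hδ0.1 (z : ℂ)
      have habs : |δ0 - δ| < e / 3 := by rw [abs_sub_comm]; exact hclose
      linarith
    · intro δ0 hδ0
      rw [ContinuousWithinAt,
        ContinuousMap.tendsto_iff_forall_isCompact_tendstoUniformlyOn]
      intro K hK
      rw [Metric.tendstoUniformlyOn_iff]
      intro e he
      have hball : ∀ᶠ δ in nhdsWithin δ0 (Set.Icc (0:ℝ) η), |δ - δ0| < e / 3 := by
        apply Filter.Eventually.filter_mono nhdsWithin_le_nhds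
        filter_upwards [Metric.ball_mem_nhds δ0 (by linarith : (0:ℝ) < e / 3)] with δ hd
        rw [Metric.mem_ball, Real.dist_eq] at hd; exact hd
      filter_upwards [hball, self_mem_nhdsWithin] with δ hclose hmem
      intro z hz
      simp only [ContinuousMap.coe_mk]
      rw [Subtype.dist_eq, Complex.dist_eq, psiH_symm_apply, psiH_symm_apply,
        clamp_eq hmem, clamp_eq hδ0]
      have := Gmap_dist (α := α) hρ hmem.1 hδ0.1 (z : ℂ)
      have habs : |δ0 - δ| < e / 3 := by rw [abs_sub_comm]; exact hclose
      linarith
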